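/- For every t > 0, x > 0 and ν > −1, the D-dimensional Bessel transition density integrates to one in its forward variable: ∫_0^∞ (1/t)·(y^{ν+1}/x^{ν})·e^{−(x²+y²)/(2t)}·I_ν(xy/t) dy = 1. -/

import Mathlib

open MeasureTheory Real Set ENNReal

/-- The modified Bessel function of the first kind of order `ν`. -/
noncomputable def besselI (ν z : ℝ) : ℝ :=
  ∑' n : ℕ, (1 / (Real.Gamma ((n : ℝ) + 1) * Real.Gamma ((n : ℝ) + 1 + ν)))
      * (z / 2) ^ (2 * (n : ℝ) + ν)

/-- The `n`-th term of the expanded Bessel density. -/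
noncomputable def gTerm (t x ν : ℝ) (n : ℕ) (y : ℝ) : ℝ :=
  ((1 / t) * (1 / x ^ ν) * Real.exp (-x ^ 2 / (2 * t)) *
    (1 / (Real.Gamma ((n : ℝ) + 1) * Real.Gamma ((n : ℝ) + 1 + ν))) *
    (x / (2 * t)) ^ (2 * (n : ℝ) + ν)) *
    (y ^ (2 * (n : ℝ) + 2 * ν + 1) * Real.exp (-(1 / (2 * t)) * y ^ (2 : ℝ)))

lemma pointwise_eq (t x ν : ℝ) (ht : 0 < t) (hx : 0 < x) {y : ℝ} (hy : 0 < y) :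
    (1 / t) * (y ^ (ν + 1) / x ^ ν) * Real.exp (-(x ^ 2 + y ^ 2) / (2 * t))
        * besselI ν (x * y / t) = ∑' n : ℕ, gTerm t x ν n y := by
  rw [besselI, ← tsum_mul_left]
  refine tsum_congr fun n => ?_
  have h2t : (0:ℝ) < 2 * t := by linarith
  have hxy : x * y / t / 2 = (x / (2 * t)) * y := by field_simp
  have h1 : (x * y / t / 2) ^ (2 * (n : ℝ) + ν)
      = (x / (2 * t)) ^ (2 * (n : ℝ) + ν) * y ^ (2 * (n : ℝ) + ν) := by
    rw [hxy, Real.mul_rpow (by positivity) hy.le]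
  have h2 : Real.exp (-(x ^ 2 + y ^ 2) / (2 * t))
      = Real.exp (-x ^ 2 / (2 * t)) * Real.exp (-(1 / (2 * t)) * y ^ (2 : ℝ)) := by
    rw [← Real.exp_add]
    congr 1
    rw [Real.rpow_two]
    field_simp
    ring
  have h3 : y ^ (ν + 1) * y ^ (2 * (n : ℝ) + ν) = y ^ (2 * (n : ℝ) + 2 * ν + 1) := by
    rw [← Real.rpow_add hy]; ring_nf
  rw [gTerm, h1, h2]
  rw [← h3]
  ring

lemma gamma_pos₁ (n : ℕ) : 0 < Real.Gamma ((n : ℝ) + 1) :=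
  Real.Gamma_pos_of_pos (by positivity)

lemma gamma_pos₂ (n : ℕ) {ν : ℝ} (hν : -1 < ν) : 0 < Real.Gamma ((n : ℝ) + 1 + ν) :=
  Real.Gamma_pos_of_pos (by have : (0:ℝ) ≤ n := n.cast_nonneg; linarith)

lemma gTerm_integral (t x ν : ℝ) (ht : 0 < t) (hx : 0 < x) (hν : -1 < ν) (n : ℕ) :
    ∫ y in Ioi (0 : ℝ), gTerm t x ν n y
      = Real.exp (-(x ^ 2 / (2 * t))) * ((x ^ 2 / (2 * t)) ^ n / n.factorial) := by
  have h2t : (0:ℝ) < 2 * t := by linarith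
  have hq : (-1 : ℝ) < 2 * (n : ℝ) + 2 * ν + 1 := by
    have : (0:ℝ) ≤ n := n.cast_nonneg; linarith
  have hb : (0:ℝ) < 1 / (2 * t) := by positivity
  have key := integral_rpow_mul_exp_neg_mul_rpow (p := 2) (q := 2 * (n : ℝ) + 2 * ν + 1)
    (b := 1 / (2 * t)) (by norm_num) hq hb
  unfold gTerm
  rw [MeasureTheory.integral_const_mul, key]
  -- now pure algebra with rpow
  have hxr : ∀ s : ℝ, x ^ s = Real.exp (s * Real.log x) := fun s => by
    rw [Real.rpow_def_of_pos hx, mul_comm]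
  have hbr : ∀ s : ℝ, (1 / (2 * t)) ^ s = Real.exp (-(s * Real.log (2 * t))) := fun s => by
    rw [Real.rpow_def_of_pos hb, one_div, Real.log_inv]
    congr 1; ring
  have hdr : ∀ s : ℝ,
      (x / (2 * t)) ^ s = Real.exp (s * (Real.log x - Real.log (2 * t))) := fun s => by
    rw [Real.rpow_def_of_pos (by positivity), Real.log_div hx.ne' h2t.ne']
    congr 1; ring
  have hu : (x ^ 2 / (2 * t) : ℝ) ^ n
      = Real.exp ((n : ℝ) * (2 * Real.log x - Real.log (2 * t))) := by
    rw [← Real.rpow_natCast (x ^ 2 / (2 * t)) n,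
      Real.rpow_def_of_pos (by positivity), Real.log_div (by positivity) h2t.ne',
      Real.log_pow]
    congr 1; push_cast; ring
  have hGamma : Real.Gamma ((2 * (n : ℝ) + 2 * ν + 1 + 1) / 2) = Real.Gamma ((n : ℝ) + 1 + ν) := by
    congr 1; ring
  have hfact : Real.Gamma ((n : ℝ) + 1) = (n.factorial : ℝ) := Real.Gamma_nat_eq_factorial n
  have hbexp : Real.exp (-(-(2 * (n : ℝ) + 2 * ν + 1 + 1) / 2 * Real.log (2 * t)))
      = Real.exp (((n : ℝ) + ν + 1) * Real.log (2 * t)) := by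
    congr 1; ring
  rw [hGamma, hfact, hxr, hdr, hbr, hu, hbexp]
  have hG := gamma_pos₂ n hν
  have hF : (0:ℝ) < (n.factorial : ℝ) := by positivity
  have h1t : (1 : ℝ) / t = 2 * Real.exp (-Real.log (2 * t)) := by
    rw [Real.exp_neg, Real.exp_log h2t]
    field_simp
  rw [h1t]
  have hux : -x ^ 2 / (2 * t) = -(x ^ 2 / (2 * t)) := by ring
  rw [hux]
  have hprod : Real.exp ((n : ℝ) * (2 * Real.log x - Real.log (2 * t)))
      = Real.exp (-Real.log (2 * t)) * (Real.exp (ν * Real.log x))⁻¹ *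
        Real.exp ((2 * (n : ℝ) + ν) * (Real.log x - Real.log (2 * t))) *
        Real.exp (((n : ℝ) + ν + 1) * Real.log (2 * t)) := by
    rw [← Real.exp_neg, ← Real.exp_add, ← Real.exp_add, ← Real.exp_add]
    congr 1; ring
  rw [hprod]
  have h1 : (0:ℝ) < Real.exp (ν * Real.log x) := Real.exp_pos _
  field_simp

lemma gTerm_meas (t x ν : ℝ) (n : ℕ) : Measurable (gTerm t x ν n) := by
  unfold gTerm
  fun_prop

lemma gTerm_nonneg (t x ν : ℝ) (ht : 0 < t) (hx : 0 < x) (hν : -1 < ν) (n : ℕ)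
    {y : ℝ} (hy : 0 < y) : 0 ≤ gTerm t x ν n y := by
  unfold gTerm
  have h1 := gamma_pos₁ n
  have h2 := gamma_pos₂ n hν
  positivity

lemma gTerm_integrable (t x ν : ℝ) (ht : 0 < t) (hx : 0 < x) (hν : -1 < ν) (n : ℕ) :
    IntegrableOn (gTerm t x ν n) (Ioi 0) := by
  have hq : (-1 : ℝ) < 2 * (n : ℝ) + 2 * ν + 1 := by
    have : (0:ℝ) ≤ n := n.cast_nonneg; linarith
  have hb : (0:ℝ) < 1 / (2 * t) := by positivity
  exact (integrableOn_rpow_mul_exp_neg_mul_rpow hq two_pos hb).const_mul _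

/-- For `t > 0`, `x > 0` and `ν > −1`, the Bessel transition density
integrates to one in its forward variable:
`∫_0^∞ (1/t)(y^{ν+1}/x^ν) e^{−(x²+y²)/(2t)} I_ν(xy/t) dy = 1`. -/
theorem statement_4 (t x ν : ℝ) (ht : 0 < t) (hx : 0 < x) (hν : -1 < ν) :
    ∫ y in Set.Ioi (0 : ℝ),
        (1 / t) * (y ^ (ν + 1) / x ^ ν) * Real.exp (-(x ^ 2 + y ^ 2) / (2 * t))
          * besselI ν (x * y / t)
      = 1 := by
  set u := x ^ 2 / (2 * t) with hu
  have hu0 : 0 < u := by positivity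
  have hI : ∀ n : ℕ, ∫ y in Ioi (0 : ℝ), gTerm t x ν n y
      = Real.exp (-u) * (u ^ n / n.factorial) := gTerm_integral t x ν ht hx hν
  have hnn : ∀ n : ℕ, 0 ≤ᵐ[volume.restrict (Ioi (0:ℝ))] gTerm t x ν n := fun n => by
    rw [Filter.EventuallyLE, ae_restrict_iff' measurableSet_Ioi]
    exact Filter.Eventually.of_forall fun y hy => gTerm_nonneg t x ν ht hx hν n hy
  have hlin : ∀ n : ℕ, ∫⁻ y in Ioi (0:ℝ), ‖gTerm t x ν n y‖₊
      = ENNReal.ofReal (Real.exp (-u) * (u ^ n / n.factorial)) := by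
    intro n
    rw [← hI n, MeasureTheory.ofReal_integral_eq_lintegral_ofReal
      (gTerm_integrable t x ν ht hx hν n) (hnn n)]
    refine lintegral_congr_ae ((hnn n).mono fun y hy => ?_)
    show (‖gTerm t x ν n y‖₊ : ℝ≥0∞) = ENNReal.ofReal (gTerm t x ν n y)
    rw [← enorm_eq_nnnorm, ← ofReal_norm_eq_enorm, Real.norm_of_nonneg hy]
  have hIsum : Summable (fun n : ℕ => Real.exp (-u) * (u ^ n / n.factorial)) :=
    (Real.summable_pow_div_factorial u).mul_left _
  have hsum_ne_top : (∑' n : ℕ, ∫⁻ y in Ioi (0:ℝ), ‖gTerm t x ν n y‖₊) ≠ ⊤ := by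
    simp_rw [hlin]
    rw [← ENNReal.ofReal_tsum_of_nonneg (fun n => by positivity) hIsum]
    exact ENNReal.ofReal_ne_top
  calc
    ∫ y in Ioi (0 : ℝ),
        (1 / t) * (y ^ (ν + 1) / x ^ ν) * Real.exp (-(x ^ 2 + y ^ 2) / (2 * t))
          * besselI ν (x * y / t)
      = ∫ y in Ioi (0 : ℝ), ∑' n : ℕ, gTerm t x ν n y := by
        refine setIntegral_congr_fun measurableSet_Ioi fun y hy => ?_
        exact pointwise_eq t x ν ht hx hy
    _ = ∑' n : ℕ, ∫ y in Ioi (0 : ℝ), gTerm t x ν n y :=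
        MeasureTheory.integral_tsum
          (fun n => (gTerm_meas t x ν n).aestronglyMeasurable) hsum_ne_top
    _ = ∑' n : ℕ, Real.exp (-u) * (u ^ n / n.factorial) := tsum_congr hI
    _ = Real.exp (-u) * ∑' n : ℕ, (u ^ n / n.factorial : ℝ) := tsum_mul_left
    _ = Real.exp (-u) * Real.exp u := by
        congr 1
        rw [Real.exp_eq_exp_ℝ, NormedSpace.exp_eq_tsum_div]
    _ = 1 := by rw [← Real.exp_add]; simp
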